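/- arXiv:1508.01552 — 2 statements merged into one kernel-verified Lean document; each statement's English description precedes it below -/
import Mathlib

section
/- Let $I \in \{0,1\}^k$ with $\hat{I} = \{\nu : i_\nu = 1\}$ of even cardinality, and let $\mu$ be a probability measure on $\mathbb{R}^d$. If $h = (h_1, \ldots, h_k)$ is a tuple of oriented hyperplanes such that $h_{\nu_1} = h_{\nu_2}$ (as oriented hyperplanes) for all $\nu_1, \nu_2 \in \hat{I}$, then $f_I^\mu(h) = 1$, where $f_I^\mu(h) = \sum_{J \in \{0,1\}^k} (-1)^{|\hat{I} \cap \hat{J}|} \mu(\bigcap_{\nu=1}^k h_\nu^{j_\nu})$. -/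
open MeasureTheory

/-- Ramos' shielding function property: if `|Î|` is even, `μ` is a probability
measure on ℝ^d vanishing on hyperplanes, and the oriented hyperplanes indexed by
`Î` all coincide, then `f_I^μ(h) = ∑_J (-1)^{|Î ∩ Ĵ|} μ(h₁^{j₁} ∩ ⋯ ∩ h_k^{j_k}) = 1`. -/
theorem stmt_2 (d k : ℕ) (μ : Measure (Fin d → ℝ)) [IsProbabilityMeasure μ]
    (w : Fin k → Fin d → ℝ) (c : Fin k → ℝ) (hw : ∀ ν, w ν ≠ 0)
    (hnull : ∀ ν, μ {x | ∑ i, w ν i * x i = c ν} = 0)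
    (I : Fin k → Bool)
    (hIeven : Even (Finset.univ.filter (fun ν => I ν = true)).card)
    (hcoin : ∀ ν₁ ν₂, I ν₁ = true → I ν₂ = true → w ν₁ = w ν₂ ∧ c ν₁ = c ν₂) :
    ∑ J : Fin k → Bool,
      (-1 : ℝ) ^ (Finset.univ.filter (fun ν => I ν = true ∧ J ν = true)).card *
        (μ (⋂ ν, if J ν then {x | ∑ i, w ν i * x i ≤ c ν}
                 else {x | c ν ≤ ∑ i, w ν i * x i})).toReal = 1 := by
  classical
  set f : Fin k → (Fin d → ℝ) → ℝ := fun ν x => ∑ i, w ν i * x i with hf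
  have hfm : ∀ ν, Measurable (f ν) := fun ν =>
    Finset.measurable_sum _ fun i _ => measurable_const.mul (measurable_pi_apply i)
  set A : Fin k → Bool → Set (Fin d → ℝ) :=
    fun ν b => if b then {x | f ν x ≤ c ν} else {x | c ν ≤ f ν x} with hA
  have hAm : ∀ ν b, MeasurableSet (A ν b) := by
    intro ν b
    cases b
    · exact measurableSet_le measurable_const (hfm ν)
    · exact measurableSet_le (hfm ν) measurable_const
  set s : Fin k → Bool → ℝ := fun ν b => if I ν = true ∧ b = true then -1 else 1 with hs
  set g : Fin k → Bool → (Fin d → ℝ) → ℝ :=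
    fun ν b x => s ν b * (A ν b).indicator (1 : (Fin d → ℝ) → ℝ) x with hg
  -- pointwise product identity
  have hprod : ∀ (J : Fin k → Bool) x, ∏ ν, g ν (J ν) x =
      (∏ ν, s ν (J ν)) * (⋂ ν, A ν (J ν)).indicator (1 : (Fin d → ℝ) → ℝ) x := by
    intro J x
    rw [Finset.prod_mul_distrib]
    congr 1
    by_cases hx : x ∈ ⋂ ν, A ν (J ν)
    · rw [Set.indicator_of_mem hx]
      refine Finset.prod_eq_one fun ν _ => ?_
      exact Set.indicator_of_mem (Set.mem_iInter.1 hx ν) _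
    · rw [Set.indicator_of_notMem hx]
      obtain ⟨ν, hν⟩ := not_forall.1 (fun h => hx (Set.mem_iInter.2 h))
      exact Finset.prod_eq_zero (Finset.mem_univ ν) (Set.indicator_of_notMem hν _)
  have hsign : ∀ J : Fin k → Bool, (∏ ν, s ν (J ν)) =
      (-1 : ℝ) ^ (Finset.univ.filter (fun ν => I ν = true ∧ J ν = true)).card := by
    intro J
    rw [hs]
    simp only
    rw [Finset.prod_ite, Finset.prod_const, Finset.prod_const, one_pow, mul_one]
  -- each term is an integral
  have hterm : ∀ J : Fin k → Bool,
      (-1 : ℝ) ^ (Finset.univ.filter (fun ν => I ν = true ∧ J ν = true)).card *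
        (μ (⋂ ν, A ν (J ν))).toReal = ∫ x, ∏ ν, g ν (J ν) x ∂μ := by
    intro J
    have hmi : MeasurableSet (⋂ ν, A ν (J ν)) := MeasurableSet.iInter fun ν => hAm ν (J ν)
    rw [← hsign J]
    calc (∏ ν, s ν (J ν)) * (μ (⋂ ν, A ν (J ν))).toReal
        = (∏ ν, s ν (J ν)) * ∫ x, (⋂ ν, A ν (J ν)).indicator (1 : (Fin d → ℝ) → ℝ) x ∂μ := by
          rw [integral_indicator_one hmi]; rfl
      _ = ∫ x, (∏ ν, s ν (J ν)) * (⋂ ν, A ν (J ν)).indicator (1 : (Fin d → ℝ) → ℝ) x ∂μ := by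
          rw [integral_const_mul]
      _ = _ := by
          refine integral_congr_ae (Filter.Eventually.of_forall fun x => ?_)
          exact (hprod J x).symm
  have hint : ∀ J : Fin k → Bool, Integrable (fun x => ∏ ν, g ν (J ν) x) μ := by
    intro J
    have hmi : MeasurableSet (⋂ ν, A ν (J ν)) := MeasurableSet.iInter fun ν => hAm ν (J ν)
    have : Integrable ((⋂ ν, A ν (J ν)).indicator (1 : (Fin d → ℝ) → ℝ)) μ :=
      (integrable_const (1:ℝ)).indicator hmi
    have h2 := this.const_mul (∏ ν, s ν (J ν))
    refine h2.congr (Filter.Eventually.of_forall fun x => ?_)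
    exact (hprod J x).symm
  -- rewrite sum as integral
  have hAif : ∀ J : Fin k → Bool,
      (⋂ ν, if J ν then {x | ∑ i, w ν i * x i ≤ c ν} else {x | c ν ≤ ∑ i, w ν i * x i})
        = ⋂ ν, A ν (J ν) := fun J => rfl
  calc ∑ J : Fin k → Bool,
      (-1 : ℝ) ^ (Finset.univ.filter (fun ν => I ν = true ∧ J ν = true)).card *
        (μ (⋂ ν, if J ν then {x | ∑ i, w ν i * x i ≤ c ν}
                 else {x | c ν ≤ ∑ i, w ν i * x i})).toReal
      = ∑ J : Fin k → Bool, ∫ x, ∏ ν, g ν (J ν) x ∂μ := by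
        refine Finset.sum_congr rfl fun J _ => ?_
        rw [hAif J]; exact hterm J
    _ = ∫ x, ∑ J : Fin k → Bool, ∏ ν, g ν (J ν) x ∂μ := by
        rw [integral_finset_sum _ fun J _ => hint J]
    _ = ∫ x, (1:ℝ) ∂μ := by
        refine integral_congr_ae ?_
        have hN : μ (⋃ ν, {x | f ν x = c ν}) = 0 := measure_iUnion_null hnull
        have hae : ∀ᵐ x ∂μ, x ∉ ⋃ ν, {x | f ν x = c ν} :=
          measure_eq_zero_iff_ae_notMem.mp hN
        filter_upwards [hae] with x hx
        have hx' : ∀ ν, f ν x ≠ c ν := by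
          intro ν hν
          exact hx (Set.mem_iUnion.2 ⟨ν, hν⟩)
        rw [← Fintype.prod_sum fun ν b => g ν b x]
        have hfac : ∀ ν, (∑ b : Bool, g ν b x) =
            if I ν = true then (if f ν x ≤ c ν then (-1:ℝ) else 1) else 1 := by
          intro ν
          rw [Fintype.sum_bool]
          rcases lt_or_gt_of_ne (hx' ν) with hlt | hgt
          · have h1 : x ∈ A ν true := le_of_lt hlt
            have h2 : x ∉ A ν false := by
              simp only [hA]
              exact not_le.2 hlt
            rw [hg]
            simp only
            rw [Set.indicator_of_mem h1, Set.indicator_of_notMem h2, hs]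
            by_cases hI : I ν = true <;> simp [hI, le_of_lt hlt]
          · have h1 : x ∉ A ν true := by
              simp only [hA]
              exact not_le.2 hgt
            have h2 : x ∈ A ν false := le_of_lt hgt
            rw [hg]
            simp only
            rw [Set.indicator_of_notMem h1, Set.indicator_of_mem h2, hs]
            by_cases hI : I ν = true <;> simp [hI, not_le.2 hgt, le_of_lt hgt]
        rw [Finset.prod_congr rfl fun ν _ => hfac ν]
        rw [← Finset.prod_filter_mul_prod_filter_not Finset.univ (fun ν => I ν = true)]
        have hright : (∏ ν ∈ Finset.univ.filter (fun ν => ¬ I ν = true),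
            (if I ν = true then (if f ν x ≤ c ν then (-1:ℝ) else 1) else 1)) = 1 := by
          refine Finset.prod_eq_one fun ν hν => ?_
          rw [Finset.mem_filter] at hν
          simp [hν.2]
        rw [hright, mul_one]
        rcases Finset.eq_empty_or_nonempty (Finset.univ.filter (fun ν => I ν = true)) with he | ⟨ν₀, hν₀⟩
        · rw [he, Finset.prod_empty]
        · rw [Finset.mem_filter] at hν₀
          have hconst : ∀ ν ∈ Finset.univ.filter (fun ν => I ν = true),
              (if I ν = true then (if f ν x ≤ c ν then (-1:ℝ) else 1) else 1) =
              (if f ν₀ x ≤ c ν₀ then (-1:ℝ) else 1) := by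
            intro ν hν
            rw [Finset.mem_filter] at hν
            obtain ⟨hw', hc'⟩ := hcoin ν ν₀ hν.2 hν₀.2
            have : f ν x = f ν₀ x := by simp [hf, hw']
            rw [if_pos hν.2, this, hc']
          rw [Finset.prod_congr rfl hconst, Finset.prod_const]
          by_cases hle : f ν₀ x ≤ c ν₀
          · rw [if_pos hle]
            exact hIeven.neg_one_pow
          · rw [if_neg hle, one_pow]
    _ = 1 := by simp
end

section
/- Suppose that for every pair of continuous finite Borel measures $\nu_1, \nu_2$ on $\mathbb{R}^5$ there exist $3$ hyperplanes equipartitioning both (each of the $8$ hyperorthants gets $1/8$ of each measure). Then every continuous finite Borel measure $\mu$ on $\mathbb{R}^5$ admits an equipartition by $4$ hyperplanes (each of the $16$ hyperorthants gets $1/16$ of $\mu$). -/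
open MeasureTheory

lemma cdf_cont_of_no_atoms (p : Measure ℝ) [IsProbabilityMeasure p]
    (hp : ∀ x : ℝ, p {x} = 0) : Continuous (ProbabilityTheory.cdf p) := by
  rw [continuous_iff_continuousAt]
  intro x
  rw [(ProbabilityTheory.monotone_cdf p).continuousAt_iff_leftLim_eq_rightLim]
  have h1 : Function.rightLim (ProbabilityTheory.cdf p) x = ProbabilityTheory.cdf p x :=
    (ProbabilityTheory.cdf p).rightLim_eq x
  have h2 : (ProbabilityTheory.cdf p).measure {x} = 0 := by
    rw [ProbabilityTheory.measure_cdf]; exact hp x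
  rw [(ProbabilityTheory.cdf p).measure_singleton] at h2
  have h3 : ProbabilityTheory.cdf p x - Function.leftLim (ProbabilityTheory.cdf p) x ≤ 0 := by
    simpa [ENNReal.ofReal_eq_zero] using h2
  have h4 : Function.leftLim (ProbabilityTheory.cdf p) x ≤ ProbabilityTheory.cdf p x :=
    (ProbabilityTheory.monotone_cdf p).leftLim_le le_rfl
  rw [h1]
  linarith

lemma exists_bisect (ν : Measure ℝ) [IsFiniteMeasure ν] (h : ∀ c : ℝ, ν {c} = 0) :
    ∃ c : ℝ, ν (Set.Iic c) = ν Set.univ / 2 := by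
  by_cases h0 : ν Set.univ = 0
  · refine ⟨0, ?_⟩
    rw [measure_mono_null (Set.subset_univ _) h0, h0, ENNReal.zero_div]
  · set p : Measure ℝ := (ν Set.univ)⁻¹ • ν with hpdef
    haveI : IsProbabilityMeasure p :=
      ⟨by rw [Measure.smul_apply, smul_eq_mul,
          ENNReal.inv_mul_cancel h0 (measure_ne_top ν _)]⟩
    have hp : ∀ x : ℝ, p {x} = 0 := fun x => by
      simp [hpdef, Measure.smul_apply, h x]
    have hcont : Continuous (ProbabilityTheory.cdf p) := cdf_cont_of_no_atoms p hp
    obtain ⟨c, hc⟩ : ∃ x, ProbabilityTheory.cdf p x = 1 / 2 :=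
      intermediate_value_univ₂_eventually₂ (l₁ := Filter.atBot) (l₂ := Filter.atTop)
        hcont continuous_const
        ((ProbabilityTheory.tendsto_cdf_atBot p).eventually_le_const (by norm_num : (0:ℝ) < 1/2))
        ((ProbabilityTheory.tendsto_cdf_atTop p).eventually_const_le (by norm_num : (1:ℝ)/2 < 1))
    have hpc : p (Set.Iic c) = 2⁻¹ := by
      rw [← ProbabilityTheory.ofReal_cdf p c, hc, one_div,
        ENNReal.ofReal_inv_of_pos two_pos]
      norm_num
    refine ⟨c, ?_⟩
    have : (ν Set.univ)⁻¹ * ν (Set.Iic c) = 2⁻¹ := by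
      rw [← hpc, hpdef, Measure.smul_apply, smul_eq_mul]
    have h2 := congrArg (ν Set.univ * ·) this
    simp only [← mul_assoc, ENNReal.mul_inv_cancel h0 (measure_ne_top ν _), one_mul] at h2
    rw [h2, ENNReal.div_eq_inv_mul, mul_comm]

/-- If every pair of continuous finite Borel measures on ℝ⁵ admits a common
equipartition by 3 hyperplanes, then every continuous finite Borel measure on ℝ⁵
admits an equipartition by 4 hyperplanes. -/
theorem stmt_16
    (H : ∀ (ν₁ ν₂ : Measure (Fin 5 → ℝ)), IsFiniteMeasure ν₁ → IsFiniteMeasure ν₂ →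
      (∀ (w : Fin 5 → ℝ) (c : ℝ), w ≠ 0 → ν₁ {x | ∑ i, w i * x i = c} = 0) →
      (∀ (w : Fin 5 → ℝ) (c : ℝ), w ≠ 0 → ν₂ {x | ∑ i, w i * x i = c} = 0) →
      ∃ (w : Fin 3 → Fin 5 → ℝ) (c : Fin 3 → ℝ), (∀ j, w j ≠ 0) ∧
        ∀ s : Fin 3 → Bool,
          ν₁ (⋂ j, if s j then {x | ∑ i, w j i * x i ≤ c j}
                   else {x | c j ≤ ∑ i, w j i * x i}) = ν₁ Set.univ / 8 ∧
          ν₂ (⋂ j, if s j then {x | ∑ i, w j i * x i ≤ c j}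
                   else {x | c j ≤ ∑ i, w j i * x i}) = ν₂ Set.univ / 8) :
    ∀ (μ : Measure (Fin 5 → ℝ)), IsFiniteMeasure μ →
      (∀ (w : Fin 5 → ℝ) (c : ℝ), w ≠ 0 → μ {x | ∑ i, w i * x i = c} = 0) →
      ∃ (w : Fin 4 → Fin 5 → ℝ) (c : Fin 4 → ℝ), (∀ j, w j ≠ 0) ∧
        ∀ s : Fin 4 → Bool,
          μ (⋂ j, if s j then {x | ∑ i, w j i * x i ≤ c j}
                  else {x | c j ≤ ∑ i, w j i * x i}) = μ Set.univ / 16 := by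
  intro μ hfin hcont
  haveI := hfin
  -- the first hyperplane: x 0 = c₀, bisecting μ
  set w0 : Fin 5 → ℝ := fun i => if i = 0 then 1 else 0 with hw0def
  have hw0 : w0 ≠ 0 := by
    intro h
    have := congrFun h 0
    simp [hw0def] at this
  have hsum0 : ∀ x : Fin 5 → ℝ, ∑ i, w0 i * x i = x 0 := by
    intro x
    simp [hw0def, ite_mul, Finset.sum_ite_eq']
  -- measurability of the linear functional
  have hmeas : ∀ (w : Fin 5 → ℝ), Measurable (fun x : Fin 5 → ℝ => ∑ i, w i * x i) := by
    intro w
    exact Finset.measurable_sum _ fun i _ => measurable_const.mul (measurable_pi_apply i)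
  -- pushforward along the first coordinate
  set ν : Measure ℝ := μ.map (fun x => x 0) with hνdef
  haveI : IsFiniteMeasure ν := by
    constructor
    rw [hνdef, Measure.map_apply (measurable_pi_apply 0) MeasurableSet.univ]
    exact measure_lt_top μ _
  have hν : ∀ c : ℝ, ν {c} = 0 := by
    intro c
    rw [hνdef, Measure.map_apply (measurable_pi_apply 0) (measurableSet_singleton c)]
    have : (fun x : Fin 5 → ℝ => x 0) ⁻¹' {c} = {x | ∑ i, w0 i * x i = c} := by
      ext x; simp [hsum0 x]
    rw [this]
    exact hcont w0 c hw0
  obtain ⟨c0, hc0⟩ := exists_bisect ν hν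
  have hIic : μ {x : Fin 5 → ℝ | x 0 ≤ c0} = μ Set.univ / 2 := by
    have : ν (Set.Iic c0) = μ {x : Fin 5 → ℝ | x 0 ≤ c0} := by
      rw [hνdef, Measure.map_apply (measurable_pi_apply 0) measurableSet_Iic]; rfl
    have huniv : ν Set.univ = μ Set.univ := by
      rw [hνdef, Measure.map_apply (measurable_pi_apply 0) MeasurableSet.univ]; simp
    rw [← this, hc0, huniv]
  have hmeasIic : MeasurableSet {x : Fin 5 → ℝ | x 0 ≤ c0} :=
    measurableSet_le (measurable_pi_apply 0) measurable_const
  have hmeasIci : MeasurableSet {x : Fin 5 → ℝ | c0 ≤ x 0} :=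
    measurableSet_le measurable_const (measurable_pi_apply 0)
  have hIci : μ {x : Fin 5 → ℝ | c0 ≤ x 0} = μ Set.univ / 2 := by
    have heq : μ {x : Fin 5 → ℝ | x 0 = c0} = 0 := by
      have : {x : Fin 5 → ℝ | x 0 = c0} = {x | ∑ i, w0 i * x i = c0} := by
        ext x; simp [hsum0 x]
      rw [this]; exact hcont w0 c0 hw0
    have hunion : {x : Fin 5 → ℝ | x 0 ≤ c0} ∪ {x : Fin 5 → ℝ | c0 ≤ x 0} = Set.univ := by
      ext x; simp [le_total]
    have hinter : {x : Fin 5 → ℝ | x 0 ≤ c0} ∩ {x : Fin 5 → ℝ | c0 ≤ x 0}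
        = {x : Fin 5 → ℝ | x 0 = c0} := by
      ext x; simp [le_antisymm_iff, and_comm]
    have := measure_union_add_inter {x : Fin 5 → ℝ | x 0 ≤ c0} hmeasIci
      (μ := μ) (t := {x : Fin 5 → ℝ | c0 ≤ x 0})
    rw [hunion, hinter, heq, add_zero, hIic] at this
    have hne : μ Set.univ / 2 ≠ ⊤ := (ENNReal.div_lt_top (measure_ne_top μ _) (by norm_num)).ne
    have h3 : μ Set.univ / 2 + μ {x : Fin 5 → ℝ | c0 ≤ x 0}
        = μ Set.univ / 2 + μ Set.univ / 2 := by
      rw [← this, ENNReal.add_halves]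
    exact (ENNReal.add_right_inj hne).mp h3
  -- the two restricted measures
  set μp : Measure (Fin 5 → ℝ) := μ.restrict {x | x 0 ≤ c0} with hμpdef
  set μm : Measure (Fin 5 → ℝ) := μ.restrict {x | c0 ≤ x 0} with hμmdef
  haveI : IsFiniteMeasure μp := inferInstance
  haveI : IsFiniteMeasure μm := inferInstance
  have hμpnull : ∀ (w : Fin 5 → ℝ) (c : ℝ), w ≠ 0 → μp {x | ∑ i, w i * x i = c} = 0 :=
    fun w c hw => le_antisymm ((Measure.restrict_le_self _).trans_eq (hcont w c hw)) (zero_le)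
  have hμmnull : ∀ (w : Fin 5 → ℝ) (c : ℝ), w ≠ 0 → μm {x | ∑ i, w i * x i = c} = 0 :=
    fun w c hw => le_antisymm ((Measure.restrict_le_self _).trans_eq (hcont w c hw)) (zero_le)
  obtain ⟨w3, c3, hw3, hs3⟩ := H μp μm inferInstance inferInstance hμpnull hμmnull
  refine ⟨Fin.cons w0 w3, Fin.cons c0 c3, ?_, ?_⟩
  · intro j
    refine Fin.cases ?_ ?_ j
    · simpa using hw0
    · intro i; simpa using hw3 i
  · intro s
    have hsplit : ∀ (F : Fin 4 → Set (Fin 5 → ℝ)), (⋂ j, F j) = F 0 ∩ ⋂ j : Fin 3, F j.succ := by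
      intro F; ext x; simp [Set.mem_iInter, Fin.forall_fin_succ]
    rw [hsplit]
    set T : Set (Fin 5 → ℝ) := ⋂ j : Fin 3, (if s j.succ then {x | ∑ i, w3 j i * x i ≤ c3 j}
        else {x | c3 j ≤ ∑ i, w3 j i * x i}) with hTdef
    have hTmeas : MeasurableSet T := by
      refine MeasurableSet.iInter fun j => ?_
      cases s j.succ
      · simpa using measurableSet_le measurable_const (hmeas (w3 j))
      · simpa using measurableSet_le (hmeas (w3 j)) measurable_const
    simp only [Fin.cons_succ, Fin.cons_zero, ← hTdef]
    have half16 : μ Set.univ / 2 / 8 = μ Set.univ / 16 := by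
      rw [div_eq_mul_inv, div_eq_mul_inv, div_eq_mul_inv, mul_assoc,
        ← ENNReal.mul_inv (by norm_num) (by norm_num)]
      norm_num
    obtain ⟨hsp, hsm⟩ := hs3 (fun j => s j.succ)
    cases hs0 : s 0
    · -- s 0 = false : first set is {x | c0 ≤ x 0}
      have hF0 : {x : Fin 5 → ℝ | c0 ≤ ∑ i, w0 i * x i} = {x : Fin 5 → ℝ | c0 ≤ x 0} := by
        ext x; simp [hsum0 x]
      rw [if_neg (by simp), hF0]
      calc μ ({x : Fin 5 → ℝ | c0 ≤ x 0} ∩ T) = μm T := by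
            rw [hμmdef, Measure.restrict_apply hTmeas, Set.inter_comm]
        _ = μm Set.univ / 8 := hsm
        _ = μ Set.univ / 2 / 8 := by
            rw [hμmdef, Measure.restrict_apply_univ, hIci]
        _ = μ Set.univ / 16 := half16
    · -- s 0 = true : first set is {x | x 0 ≤ c0}
      have hF0 : {x : Fin 5 → ℝ | ∑ i, w0 i * x i ≤ c0} = {x : Fin 5 → ℝ | x 0 ≤ c0} := by
        ext x; simp [hsum0 x]
      rw [if_pos rfl, hF0]
      calc μ ({x : Fin 5 → ℝ | x 0 ≤ c0} ∩ T) = μp T := by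
            rw [hμpdef, Measure.restrict_apply hTmeas, Set.inter_comm]
        _ = μp Set.univ / 8 := hsp
        _ = μ Set.univ / 2 / 8 := by
            rw [hμpdef, Measure.restrict_apply_univ, hIic]
        _ = μ Set.univ / 16 := half16
end
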